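/- arXiv:1611.07146 — 2 statements merged into one kernel-verified Lean document; each statement's English description precedes it below -/
import Mathlib

section
/- Two normal-form pairs (e¹, a e¹ + s f¹ + d f^n) and (e¹, a' e¹ + s f¹ + d f^n) with gcd(a,d) = gcd(a',d) = 1 lie in the same diagonal Sp(2n,ℤ)-orbit if and only if a ≡ a' (mod d). -/
open Matrix

/-- The standard basis vector `eᵢ` of `ℤ^{2n}`. -/
def eVec (n : ℕ) (i : Fin n) : (Fin n ⊕ Fin n) → ℤ := Pi.single (Sum.inl i) 1

/-- The standard basis vector `fᵢ` of `ℤ^{2n}`. -/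
def fVec (n : ℕ) (i : Fin n) : (Fin n ⊕ Fin n) → ℤ := Pi.single (Sum.inr i) 1

/-- The normal form second vector `a e¹ + s f¹ + d fⁿ`. -/
def normalForm (n : ℕ) (hn : 2 ≤ n) (a s d : ℤ) : (Fin n ⊕ Fin n) → ℤ :=
  a • eVec n ⟨0, by omega⟩ + s • fVec n ⟨0, by omega⟩ + d • fVec n ⟨n - 1, by omega⟩

/-- Symplectic matrices preserve the bilinear form given by `J`. -/
lemma sympl_inv {n : ℕ} {γ : Matrix (Fin n ⊕ Fin n) (Fin n ⊕ Fin n) ℤ}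
    (hγ : γ ∈ Matrix.symplecticGroup (Fin n) ℤ) (x y : (Fin n ⊕ Fin n) → ℤ) :
    (γ *ᵥ x) ⬝ᵥ (Matrix.J (Fin n) ℤ *ᵥ (γ *ᵥ y)) = x ⬝ᵥ (Matrix.J (Fin n) ℤ *ᵥ y) := by
  rw [SymplecticGroup.mem_iff'] at hγ
  rw [mulVec_mulVec, dotProduct_mulVec, dotProduct_mulVec, vecMul_mulVec, ← Matrix.mul_assoc, hγ]

lemma J_e (n : ℕ) (i : Fin n) : Matrix.J (Fin n) ℤ *ᵥ eVec n i = fVec n i := by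
  ext j
  cases j <;>
    simp [Matrix.J, Matrix.mulVec, dotProduct, eVec, fVec, Matrix.fromBlocks,
      Pi.single_apply, Fintype.sum_sum_type, Matrix.one_apply, eq_comm]

lemma J_f (n : ℕ) (i : Fin n) : Matrix.J (Fin n) ℤ *ᵥ fVec n i = -eVec n i := by
  ext j
  cases j <;>
    simp [Matrix.J, Matrix.mulVec, dotProduct, eVec, fVec, Matrix.fromBlocks,
      Pi.single_apply, Fintype.sum_sum_type, Matrix.one_apply, eq_comm]

lemma f_dot_f (n : ℕ) (i j : Fin n) : fVec n i ⬝ᵥ fVec n j = if i = j then 1 else 0 := by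
  simp [fVec, dotProduct, Pi.single_apply, Fintype.sum_sum_type, eq_comm]

lemma f_dot_e (n : ℕ) (i j : Fin n) : fVec n i ⬝ᵥ eVec n j = 0 := by
  simp [fVec, eVec, dotProduct, Pi.single_apply, Fintype.sum_sum_type]

lemma stdT {n : ℕ} (i j : Fin n) (c : ℤ) :
    (Matrix.single i j c)ᵀ = Matrix.single j i c := by
  ext p q
  simp [Matrix.single, and_comm]

/-- Two normal-form pairs `(e¹, a e¹ + s f¹ + d fⁿ)` and
`(e¹, a' e¹ + s f¹ + d fⁿ)` with `gcd(a,d) = gcd(a',d) = 1` lie in the same diagonal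
`Sp(2n,ℤ)`-orbit iff `a ≡ a' (mod d)`. -/
theorem normal_form_orbit_iff (n : ℕ) (hn : 2 ≤ n)
    (a a' s d : ℤ) (hds : d ∣ s) (ha : IsCoprime a d) (ha' : IsCoprime a' d) :
    (∃ γ ∈ Matrix.symplecticGroup (Fin n) ℤ,
        γ *ᵥ eVec n ⟨0, by omega⟩ = eVec n ⟨0, by omega⟩ ∧
        γ *ᵥ normalForm n hn a s d = normalForm n hn a' s d) ↔
      a ≡ a' [ZMOD d] := by
  constructor
  · rintro ⟨γ, hγ, h1, h2⟩
    set z : Fin n := ⟨0, by omega⟩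
    set w := γ *ᵥ fVec n z with hw
    have key : w ⬝ᵥ (Matrix.J (Fin n) ℤ *ᵥ normalForm n hn a' s d) =
        fVec n z ⬝ᵥ (Matrix.J (Fin n) ℤ *ᵥ normalForm n hn a s d) := by
      rw [hw, ← h2, sympl_inv hγ]
    have key1 : w ⬝ᵥ fVec n z = 1 := by
      have := sympl_inv hγ (fVec n z) (eVec n z)
      rw [h1, J_e, f_dot_f, if_pos rfl] at this
      exact this
    rw [normalForm, normalForm] at key
    simp only [mulVec_add, mulVec_smul, dotProduct_add, dotProduct_smul, smul_eq_mul,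
      J_e, J_f, dotProduct_neg, mulVec_neg, f_dot_f, f_dot_e, key1, if_pos rfl] at key
    obtain ⟨m, rfl⟩ := hds
    simp only [if_true, mul_one, mul_zero, neg_zero, add_zero] at key
    rw [Int.modEq_iff_dvd]
    exact ⟨m * (w ⬝ᵥ eVec n ⟨0, by omega⟩) + (w ⬝ᵥ eVec n ⟨n - 1, by omega⟩),
      by simp only [z, if_true] at key key1; linear_combination key - a' * key1⟩
  · intro h
    obtain ⟨m, rfl⟩ := hds
    obtain ⟨k, hk⟩ := (Int.modEq_iff_dvd.mp h)
    set i0 : Fin n := ⟨0, by omega⟩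
    set i1 : Fin n := ⟨n - 1, by omega⟩
    have hne : i1 ≠ i0 := by
      simp only [i0, i1, ne_eq, Fin.mk.injEq]
      omega
    set B : Matrix (Fin n) (Fin n) ℤ :=
      Matrix.single i0 i1 k + Matrix.single i1 i0 k
        + Matrix.single i1 i1 (-(k * m)) with hB
    have hBsymm : Bᵀ = B := by
      rw [hB]
      simp only [Matrix.transpose_add, stdT]
      abel
    refine ⟨Matrix.fromBlocks 1 B 0 1, ?_, ?_, ?_⟩
    · rw [SymplecticGroup.mem_iff]
      rw [Matrix.J, Matrix.fromBlocks_transpose, Matrix.fromBlocks_multiply,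
        Matrix.fromBlocks_multiply]
      simp [hBsymm]
    · rw [Matrix.fromBlocks_mulVec]
      funext j
      cases j <;> simp [eVec, Pi.single_apply, Matrix.mulVec, dotProduct]
    · rw [Matrix.fromBlocks_mulVec]
      funext j
      rcases j with j | j
      · simp only [Sum.elim_inl, Matrix.one_mulVec, hB, Matrix.add_mulVec,
          Matrix.single_mulVec]
        simp [normalForm, eVec, fVec, Function.comp, Pi.single_apply,
          Function.update_apply, hne, i0, i1]
        split_ifs <;> simp_all <;> linarith
      · simp only [Sum.elim_inr, Matrix.zero_mulVec, Matrix.one_mulVec, zero_add]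
        simp [normalForm, eVec, fVec, Pi.single_apply]
end

section
/- With X as above and φ Euler's totient function, the Dirichlet series of the Dirichlet convolution φ * X equals ζ(w−2n+1)/ζ(w) for Re(w) sufficiently large. -/
open Complex

/-- The multiplicative function `X(s) = s^{2n-1} ∏_{p ∣ s} (1 - p^{-(2n-2)})`. -/
noncomputable def Xfun (n s : ℕ) : ℝ :=
  (s : ℝ) ^ (2 * n - 1) * ∏ p ∈ s.primeFactors, (1 - (p : ℝ) ^ (-((2 * (n : ℤ) - 2))))

/-- The Dirichlet convolution `(φ * X)(s) = ∑_{d ∣ s} φ(d) X(s/d)`. -/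
noncomputable def phiX (n s : ℕ) : ℝ :=
  ∑ d ∈ s.divisors, (Nat.totient d : ℝ) * Xfun n (s / d)

open ArithmeticFunction Finset
open scoped ArithmeticFunction.Moebius ArithmeticFunction.zeta

-- Squarefree product of primes
lemma sqfree_prod_primes : ∀ (t : Finset ℕ), (∀ p ∈ t, p.Prime) → Squarefree (∏ p ∈ t, p) := by
  intro t
  induction t using Finset.induction_on with
  | empty => simp [squarefree_one]
  | insert _ _ hx ih =>
    rename_i a s
    intro h
    rw [Finset.prod_insert hx]
    have ha : a.Prime := h a (Finset.mem_insert_self a s)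
    refine (Nat.squarefree_mul ?_).mpr ⟨ha.squarefree, ih fun p hp => h p (Finset.mem_insert_of_mem hp)⟩
    exact Nat.Coprime.prod_right fun q hq =>
      (Nat.coprime_primes ha (h q (Finset.mem_insert_of_mem hq))).mpr (fun e => hx (e ▸ hq))

-- general moebius sum = product formula
lemma prod_one_sub_eq_sum (f : ArithmeticFunction ℝ) (hf : f.IsMultiplicative) {s : ℕ}
    (hs : s ≠ 0) :
    ∏ p ∈ s.primeFactors, (1 - f p) = ∑ d ∈ s.divisors, (μ d : ℝ) * f d := by
  classical
  set r := ∏ p ∈ s.primeFactors, p with hr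
  have hprimes : ∀ p ∈ s.primeFactors, p.Prime := fun p hp => Nat.prime_of_mem_primeFactors hp
  have hsf : Squarefree r := sqfree_prod_primes _ hprimes
  have hpf : r.primeFactors = s.primeFactors := Nat.primeFactors_prod hprimes
  have hdvd : r ∣ s := Nat.prod_primeFactors_dvd s
  have hdivs : r.divisors = {d ∈ s.divisors | Squarefree d} := by
    ext d
    simp only [Nat.mem_divisors, Finset.mem_filter]
    constructor
    · rintro ⟨hdr, hr0⟩
      exact ⟨⟨hdr.trans hdvd, hs⟩, hsf.squarefree_of_dvd hdr⟩
    · rintro ⟨⟨hds, -⟩, hsq⟩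
      refine ⟨?_, hsf.ne_zero⟩
      calc d = ∏ p ∈ d.primeFactors, p := (Nat.prod_primeFactors_of_squarefree hsq).symm
        _ ∣ r := Finset.prod_dvd_prod_of_subset _ _ _ (Nat.primeFactors_mono hds hs)
  rw [← hpf, hf.prodPrimeFactors_one_sub_of_squarefree f hsf, hdivs]
  exact Finset.sum_filter_of_ne fun d _ hne => by
    by_contra hsq
    simp [ArithmeticFunction.moebius_eq_zero_of_not_squarefree hsq] at hne

-- the auxiliary multiplicative function d ↦ d^{-(2n-2)}
noncomputable def negpow (n : ℕ) : ArithmeticFunction ℝ :=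
  ⟨fun d => if d = 0 then 0 else (d : ℝ) ^ (-(2 * (n : ℤ) - 2)), by simp⟩

lemma negpow_apply {n d : ℕ} (hd : d ≠ 0) :
    negpow n d = (d : ℝ) ^ (-(2 * (n : ℤ) - 2)) := by
  simp [negpow, hd]

lemma negpow_mult (n : ℕ) : (negpow n).IsMultiplicative := by
  constructor
  · simp [negpow]
  · intro m k hmk
    rcases eq_or_ne m 0 with rfl | hm
    · simp [negpow]
    rcases eq_or_ne k 0 with rfl | hk
    · simp [negpow]
    rw [negpow_apply (Nat.mul_ne_zero hm hk), negpow_apply hm, negpow_apply hk,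
      Nat.cast_mul, mul_zpow]

noncomputable def Mr : ArithmeticFunction ℝ := ((μ : ArithmeticFunction ℤ) : ArithmeticFunction ℝ)
noncomputable def Idr : ArithmeticFunction ℝ := ((ArithmeticFunction.id : ArithmeticFunction ℕ) : ArithmeticFunction ℝ)
noncomputable def Powr (k : ℕ) : ArithmeticFunction ℝ := ((pow k : ArithmeticFunction ℕ) : ArithmeticFunction ℝ)

-- Lemma A
lemma Xfun_eq (n : ℕ) (hn : 1 ≤ n) {s : ℕ} (hs : s ≠ 0) :
    Xfun n s = (pmul Mr Idr * Powr (2 * n - 1)) s := by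
  have hk : 2 * n - 1 ≠ 0 := by omega
  rw [ArithmeticFunction.mul_apply, Nat.sum_divisorsAntidiagonal
    (fun i j => (pmul Mr Idr) i * (Powr (2 * n - 1)) j)]
  have hprod : ∏ p ∈ s.primeFactors, (1 - (p : ℝ) ^ (-(2 * (n : ℤ) - 2))) =
      ∑ d ∈ s.divisors, (μ d : ℝ) * negpow n d := by
    rw [← prod_one_sub_eq_sum (negpow n) (negpow_mult n) hs]
    exact Finset.prod_congr rfl fun p hp => by
      rw [negpow_apply (Nat.prime_of_mem_primeFactors hp).ne_zero]
  rw [Xfun, hprod, Finset.mul_sum]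
  refine Finset.sum_congr rfl fun d hd => ?_
  have hds : d ∣ s := Nat.dvd_of_mem_divisors hd
  have hd0 : d ≠ 0 := fun h => hs (Nat.eq_zero_of_zero_dvd (h ▸ hds))
  have hq0 : s / d ≠ 0 := Nat.div_ne_zero_iff.mpr ⟨hd0, Nat.le_of_dvd (Nat.pos_of_ne_zero hs) hds⟩
  simp only [Mr, Idr, Powr, pmul_apply, intCoe_apply, natCoe_apply, ArithmeticFunction.id_apply,
    ArithmeticFunction.pow_apply, hk, false_and, if_false]
  -- goal : s^(2n-1) * (μ d * negpow n d) = (μ d * d) * (s/d)^(2n-1)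
  rw [negpow_apply hd0]
  have he : (-(2 * (n : ℤ) - 2)) = -((2 * n - 2 : ℕ) : ℤ) := by omega
  rw [he, zpow_neg, zpow_natCast]
  have hsd : (s : ℝ) = (d : ℝ) * ((s / d : ℕ) : ℝ) := by
    rw [← Nat.cast_mul, Nat.mul_div_cancel' hds]
  have hdr : (d : ℝ) ≠ 0 := Nat.cast_ne_zero.mpr hd0
  have hkk : 2 * n - 1 = (2 * n - 2) + 1 := by omega
  rw [hsd, hkk]
  field_simp
  push_cast
  ring

noncomputable def Phir : ArithmeticFunction ℝ := ⟨fun d => (Nat.totient d : ℝ), by simp⟩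

lemma zeta_mul_phi : ((ζ : ArithmeticFunction ℕ) : ArithmeticFunction ℝ) * Phir = Idr := by
  ext s
  rw [coe_zeta_mul_apply]
  simp only [Phir, ArithmeticFunction.coe_mk, Idr, natCoe_apply, ArithmeticFunction.id_apply]
  rw [← Nat.cast_sum, Finset.sum_congr rfl (fun d _ => rfl), Nat.sum_totient]

lemma phi_eq : Phir = Idr * Mr := by
  have h := zeta_mul_phi
  calc Phir = 1 * Phir := (one_mul _).symm
    _ = (↑ζ * Mr) * Phir := by rw [show ((ζ : ArithmeticFunction ℕ) : ArithmeticFunction ℝ) * Mr = 1 from coe_zeta_mul_coe_moebius]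
    _ = (↑ζ * Phir) * Mr := by ring
    _ = Idr * Mr := by rw [h]

lemma id_mul_pmul : Idr * pmul Mr Idr = 1 := by
  ext s
  rcases eq_or_ne s 0 with rfl | hs
  · simp
  rw [ArithmeticFunction.mul_apply, Nat.sum_divisorsAntidiagonal' (fun i j => Idr i * (pmul Mr Idr) j)]
  have : ∀ d ∈ s.divisors, Idr (s / d) * (pmul Mr Idr) d = (s : ℝ) * (μ d : ℝ) := by
    intro d hd
    have hds : d ∣ s := Nat.dvd_of_mem_divisors hd
    simp only [Idr, Mr, pmul_apply, natCoe_apply, intCoe_apply, ArithmeticFunction.id_apply]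
    rw [show ((s / d : ℕ) : ℝ) * ((μ d : ℝ) * d) = (((s / d : ℕ) : ℝ) * d) * μ d by ring,
      ← Nat.cast_mul, Nat.div_mul_cancel hds]
  rw [Finset.sum_congr rfl this, ← Finset.mul_sum]
  have : ∑ d ∈ s.divisors, (μ d : ℝ) = ((Mr * ↑ζ) s) := by
    rw [coe_mul_zeta_apply]; rfl
  rw [this, show Mr * ((ζ : ArithmeticFunction ℕ) : ArithmeticFunction ℝ) = 1 from coe_moebius_mul_coe_zeta]
  rcases eq_or_ne s 1 with rfl | h1
  · simp
  · simp [ArithmeticFunction.one_apply_ne h1]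

lemma key_identity (k : ℕ) : Phir * (pmul Mr Idr * Powr k) = Mr * Powr k := by
  rw [phi_eq, show Idr * Mr * (pmul Mr Idr * Powr k) = (Mr * Powr k) * (Idr * pmul Mr Idr) by ring,
    id_mul_pmul, mul_one]

-- Lemma B
lemma phiX_eq (n : ℕ) (hn : 1 ≤ n) (s : ℕ) :
    phiX n s = (Mr * Powr (2 * n - 1)) s := by
  rcases eq_or_ne s 0 with rfl | hs
  · simp [phiX, ArithmeticFunction.map_zero]
  rw [← key_identity (2 * n - 1), ArithmeticFunction.mul_apply,
    Nat.sum_divisorsAntidiagonal (fun i j => Phir i * (pmul Mr Idr * Powr (2 * n - 1)) j)]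
  refine Finset.sum_congr rfl fun d hd => ?_
  have hds : d ∣ s := Nat.dvd_of_mem_divisors hd
  have hd0 : d ≠ 0 := fun h => hs (Nat.eq_zero_of_zero_dvd (h ▸ hds))
  have hq0 : s / d ≠ 0 := Nat.div_ne_zero_iff.mpr ⟨hd0, Nat.le_of_dvd (Nat.pos_of_ne_zero hs) hds⟩
  rw [← Xfun_eq n hn hq0]
  rfl

noncomputable def Mc : ArithmeticFunction ℂ := ((μ : ArithmeticFunction ℤ) : ArithmeticFunction ℂ)
noncomputable def Powc (k : ℕ) : ArithmeticFunction ℂ := ((pow k : ArithmeticFunction ℕ) : ArithmeticFunction ℂ)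

lemma cast_MrPowr (k s : ℕ) : (((Mr * Powr k) s : ℝ) : ℂ) = (Mc * Powc k) s := by
  simp only [ArithmeticFunction.mul_apply, Mr, Mc, Powr, Powc, intCoe_apply, natCoe_apply]
  push_cast
  rfl

lemma Mc_coe : (fun n => Mc n) = fun n : ℕ => ((μ n : ℤ) : ℂ) := by
  funext n; simp [Mc]

lemma term_powc (k : ℕ) (hk : k ≠ 0) (w : ℂ) (m : ℕ) :
    LSeries.term (fun n => Powc k n) w m = LSeries.term 1 (w - k) m := by
  rcases eq_or_ne m 0 with rfl | hm
  · simp [LSeries.term_zero]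
  rw [LSeries.term_of_ne_zero hm, LSeries.term_of_ne_zero hm]
  have hmc : (m : ℂ) ≠ 0 := Nat.cast_ne_zero.mpr hm
  rw [Complex.cpow_sub _ _ hmc, Complex.cpow_natCast]
  simp only [Powc, natCoe_apply, ArithmeticFunction.pow_apply, hk, false_and, if_false,
    Pi.one_apply]
  rw [one_div_div]
  push_cast
  rfl

lemma powc_summable {k : ℕ} (hk : k ≠ 0) {w : ℂ} (hw : 1 < (w - k).re) :
    LSeriesSummable (fun n => Powc k n) w := by
  unfold LSeriesSummable
  rw [show LSeries.term (fun n => Powc k n) w = LSeries.term 1 (w - k) from funext (term_powc k hk w)]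
  exact LSeriesSummable_one_iff.mpr hw

lemma LSeries_powc {k : ℕ} (hk : k ≠ 0) {w : ℂ} (hw : 1 < (w - k).re) :
    LSeries (fun n => Powc k n) w = riemannZeta (w - k) := by
  unfold LSeries
  rw [show LSeries.term (fun n => Powc k n) w = LSeries.term 1 (w - k) from funext (term_powc k hk w)]
  exact LSeries_one_eq_riemannZeta hw

/-- The Dirichlet series of the Dirichlet convolution `φ * X` equals
`ζ(w - 2n + 1)/ζ(w)` for `Re(w)` sufficiently large. -/
theorem phiX_dirichlet_series (n : ℕ) (hn : 1 ≤ n) :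
    ∃ W : ℝ, ∀ w : ℂ, W < w.re →
      ∑' s : ℕ+, (phiX n s : ℂ) / ((s : ℕ) : ℂ) ^ w =
        riemannZeta (w - (2 * n - 1)) / riemannZeta w := by
  refine ⟨2 * n, fun w hw => ?_⟩
  set k := 2 * n - 1 with hkdef
  have hk : k ≠ 0 := by omega
  have hkc : ((k : ℕ) : ℂ) = 2 * (n : ℂ) - 1 := by
    have : (k : ℕ) = 2 * n - 1 := rfl
    rw [this, Nat.cast_sub (by omega)]
    push_cast; ring
  have hw1 : 1 < w.re := by
    have : (1 : ℝ) ≤ 2 * n := by exact_mod_cast Nat.one_le_iff_ne_zero.mpr (by omega)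
    linarith
  have hwk : 1 < (w - k).re := by
    rw [Complex.sub_re]
    have : ((k : ℕ) : ℂ).re = (k : ℝ) := by simp
    rw [this]
    have hk2 : (k : ℝ) ≤ 2 * n - 1 := by
      rw [hkdef]; push_cast [Nat.cast_sub (show 1 ≤ 2 * n by omega)]; norm_num
    linarith
  set F : ℕ → ℂ := fun m => (Mc * Powc k) m with hF
  have h1 : ∑' s : ℕ+, (phiX n s : ℂ) / ((s : ℕ) : ℂ) ^ w = LSeries F w := by
    rw [LSeries]
    rw [← PNat.coe_injective.tsum_eq (f := LSeries.term F w) ?_]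
    · refine tsum_congr fun s => ?_
      rw [LSeries.term_of_ne_zero (by exact_mod_cast s.ne_zero) F w]
      congr 1
      show ((phiX n (s : ℕ) : ℝ) : ℂ) = (Mc * Powc k) (s : ℕ)
      rw [phiX_eq n hn, cast_MrPowr]
    · intro m hm
      rcases eq_or_ne m 0 with rfl | hm0
      · simp [LSeries.term_zero] at hm
      · exact ⟨⟨m, Nat.pos_of_ne_zero hm0⟩, rfl⟩
  have hsumM : LSeriesSummable (fun m => Mc m) w := by
    rw [Mc_coe]; exact ArithmeticFunction.LSeriesSummable_moebius_iff.mpr hw1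
  have hsumP : LSeriesSummable (fun m => Powc k m) w := powc_summable hk hwk
  have h2 : LSeries F w = LSeries (fun m => Mc m) w * LSeries (fun m => Powc k m) w :=
    ArithmeticFunction.LSeries_mul' hsumM hsumP
  have hMval : LSeries (fun m => Mc m) w = (riemannZeta w)⁻¹ := by
    rw [Mc_coe]
    have := LSeries_one_mul_Lseries_moebius hw1
    rw [LSeries_one_eq_riemannZeta hw1] at this
    field_simp [riemannZeta_ne_zero_of_one_lt_re hw1] at this ⊢
    linear_combination this
  rw [h1, h2, hMval, LSeries_powc hk hwk, hkc]
  rw [div_eq_mul_inv, mul_comm]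
end
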